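/- Cauchy property from entropy convergence (key step in Proposition A.1): Let Γ be a set of probability distributions on a countable set, H the Shannon entropy, and H* = sup_{P∈Γ} H(P) < ∞, with Γ convex. If (Qₙ) is a sequence in Γ with H(Qₙ) → H*, then (Qₙ) is Cauchy in total variation; specifically, for any n, m with H* − H(Qₙ) < ε and H* − H(Qₘ) < ε, one has ‖Qₙ − Qₘ‖² ≤ 16ε. -/

import Mathlib

open Real Set

lemma aux_G_deriv (u : ℝ) (h1 : (1:ℝ) + u ≠ 0) (h2 : (1:ℝ) - u ≠ 0) :
    HasDerivAt (fun v : ℝ => Real.log (1+v) - Real.log (1-v) - 2*v)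
      (1/(1+u) + 1/(1-u) - 2) u := by
  have hA : HasDerivAt (fun v : ℝ => 1 + v) 1 u := by
    simpa using (hasDerivAt_id u).const_add (1:ℝ)
  have hB : HasDerivAt (fun v : ℝ => 1 - v) (-1) u := by
    simpa using (hasDerivAt_id u).const_sub (1:ℝ)
  have h5 : HasDerivAt (fun v : ℝ => 2*v) 2 u := by
    simpa using (hasDerivAt_id u).const_mul (2:ℝ)
  have := ((hA.log h1).sub (hB.log h2)).sub h5
  exact this.congr_deriv (by ring)

lemma aux_G_nonneg : ∀ u ∈ Set.Ico (0:ℝ) 1,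
    0 ≤ Real.log (1+u) - Real.log (1-u) - 2*u := by
  have mono : MonotoneOn (fun v : ℝ => Real.log (1+v) - Real.log (1-v) - 2*v)
      (Set.Ico (0:ℝ) 1) := by
    apply monotoneOn_of_deriv_nonneg (convex_Ico 0 1)
    · apply ContinuousOn.sub
      apply ContinuousOn.sub
      · exact (continuousOn_const.add continuousOn_id).log
          (fun x hx => by rcases hx with ⟨h0, h1⟩; simp only [Pi.add_apply, Pi.sub_apply, id]; nlinarith)
      · exact (continuousOn_const.sub continuousOn_id).log
          (fun x hx => by rcases hx with ⟨h0, h1⟩; simp only [Pi.add_apply, Pi.sub_apply, id]; nlinarith)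
      · exact continuousOn_const.mul continuousOn_id
    · rw [interior_Ico]
      intro x hx
      rcases hx with ⟨h0, h1⟩
      exact (aux_G_deriv x (by nlinarith) (by nlinarith)).differentiableAt.differentiableWithinAt
    · rw [interior_Ico]
      intro x hx
      rcases hx with ⟨h0, h1⟩
      rw [(aux_G_deriv x (by nlinarith) (by nlinarith)).deriv]
      have hp1 : (0:ℝ) < 1 + x := by nlinarith
      have hp2 : (0:ℝ) < 1 - x := by nlinarith
      have e1 : (1:ℝ) - x ≤ 1/(1+x) := by
        rw [le_div_iff₀ hp1]; nlinarith
      have e2 : (1:ℝ) + x ≤ 1/(1-x) := by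
        rw [le_div_iff₀ hp2]; nlinarith
      linarith
  intro u hu
  have := mono (by constructor <;> norm_num) hu hu.1
  simpa using this

lemma aux_F_deriv (u : ℝ) (h1 : (1:ℝ) + u ≠ 0) (h2 : (1:ℝ) - u ≠ 0) :
    HasDerivAt (fun v : ℝ => (1+v) * Real.log (1+v) + (1-v) * Real.log (1-v) - v^2)
      (Real.log (1+u) - Real.log (1-u) - 2*u) u := by
  have hA : HasDerivAt (fun v : ℝ => 1 + v) 1 u := by
    simpa using (hasDerivAt_id u).const_add (1:ℝ)
  have hB : HasDerivAt (fun v : ℝ => 1 - v) (-1) u := by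
    simpa using (hasDerivAt_id u).const_sub (1:ℝ)
  have h5 : HasDerivAt (fun v : ℝ => v^2) (2*u) u := by
    simpa using (hasDerivAt_pow 2 u)
  have := ((hA.mul (hA.log h1)).add (hB.mul (hB.log h2))).sub h5
  exact this.congr_deriv (by field_simp; ring)

lemma aux_F_nonneg : ∀ u ∈ Set.Ico (0:ℝ) 1,
    u^2 ≤ (1+u) * Real.log (1+u) + (1-u) * Real.log (1-u) := by
  have mono : MonotoneOn
      (fun v : ℝ => (1+v) * Real.log (1+v) + (1-v) * Real.log (1-v) - v^2)
      (Set.Ico (0:ℝ) 1) := by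
    apply monotoneOn_of_deriv_nonneg (convex_Ico 0 1)
    · apply ContinuousOn.sub
      apply ContinuousOn.add
      · exact (continuousOn_const.add continuousOn_id).mul
          ((continuousOn_const.add continuousOn_id).log
          (fun x hx => by rcases hx with ⟨h0, h1⟩; simp only [Pi.add_apply, Pi.sub_apply, id]; nlinarith))
      · exact (continuousOn_const.sub continuousOn_id).mul
          ((continuousOn_const.sub continuousOn_id).log
          (fun x hx => by rcases hx with ⟨h0, h1⟩; simp only [Pi.add_apply, Pi.sub_apply, id]; nlinarith))
      · exact (continuousOn_id.pow 2)
    · rw [interior_Ico]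
      intro x hx
      rcases hx with ⟨h0, h1⟩
      exact (aux_F_deriv x (by nlinarith) (by nlinarith)).differentiableAt.differentiableWithinAt
    · rw [interior_Ico]
      intro x hx
      rcases hx with ⟨h0, h1⟩
      rw [(aux_F_deriv x (by nlinarith) (by nlinarith)).deriv]
      exact aux_G_nonneg x ⟨le_of_lt h0, h1⟩
  intro u hu
  have := mono (by constructor <;> norm_num) hu hu.1
  norm_num at this
  linarith

lemma aux_key_le (a b : ℝ) (ha : 0 ≤ a) (hb : 0 ≤ b) (hba : b ≤ a) :
    (a - b)^2 / (4*(a+b)) ≤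
      Real.negMulLog ((a+b)/2) - (Real.negMulLog a + Real.negMulLog b)/2 := by
  rcases eq_or_lt_of_le (add_nonneg ha hb) with hs0 | hs
  · have h1 : a = 0 := by linarith
    have h2 : b = 0 := by linarith
    simp [h1, h2]
  · rcases eq_or_lt_of_le hb with hb0 | hb0
    · -- b = 0
      have ha0 : 0 < a := by linarith
      rw [← hb0]
      have hL2 := Real.log_two_gt_d9
      have e1 : Real.log (a/2) = Real.log a - Real.log 2 :=
        Real.log_div (ne_of_gt ha0) two_ne_zero
      simp only [Real.negMulLog, add_zero, Real.log_zero, mul_zero]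
      rw [e1]
      have h4 : (a - 0)^2/(4*a) = a/4 := by field_simp; ring
      rw [h4]
      have eR : -(a/2) * (Real.log a - Real.log 2) - -a * Real.log a/2
          = a/2 * Real.log 2 := by ring
      rw [eR]
      have key : a/2 * (0.6931471803:ℝ) ≤ a/2 * Real.log 2 :=
        mul_le_mul_of_nonneg_left hL2.le (by positivity)
      linarith
    · -- 0 < b ≤ a
      have ha0 : 0 < a := lt_of_lt_of_le hb0 hba
      set s : ℝ := a + b with hsdef
      set u : ℝ := (a - b)/s with hudef
      have hsne : s ≠ 0 := ne_of_gt hs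
      have hu1 : 1 + u = 2*a/s := by rw [hudef]; field_simp; rw [hsdef]; ring
      have hu2 : 1 - u = 2*b/s := by rw [hudef]; field_simp; rw [hsdef]; ring
      have huI : u ∈ Set.Ico (0:ℝ) 1 := by
        constructor
        · exact div_nonneg (by linarith) (le_of_lt hs)
        · rw [hudef, div_lt_one hs]; linarith
      have hF := aux_F_nonneg u huI
      rw [hu1, hu2] at hF
      have e1 : Real.log (2*a/s) = Real.log 2 + Real.log a - Real.log s := by
        rw [Real.log_div (by positivity) hsne, Real.log_mul two_ne_zero (ne_of_gt ha0)]
      have e2 : Real.log (2*b/s) = Real.log 2 + Real.log b - Real.log s := by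
        rw [Real.log_div (by positivity) hsne, Real.log_mul two_ne_zero (ne_of_gt hb0)]
      have e3 : Real.log (s/2) = Real.log s - Real.log 2 :=
        Real.log_div hsne two_ne_zero
      rw [e1, e2] at hF
      have hmul := mul_le_mul_of_nonneg_left hF (by positivity : (0:ℝ) ≤ s/4)
      simp only [Real.negMulLog]
      rw [e3]
      have eL : (a - b)^2/(4*s) = s/4 * ((a-b)/s)^2 := by field_simp
      have eR : -(s/2) * (Real.log s - Real.log 2) - (-a * Real.log a + -b * Real.log b)/2
          = s/4 * (2*a/s * (Real.log 2 + Real.log a - Real.log s)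
              + 2*b/s * (Real.log 2 + Real.log b - Real.log s)) := by
        field_simp
        ring
      rw [eL, eR]
      exact hmul

lemma aux_key (a b : ℝ) (ha : 0 ≤ a) (hb : 0 ≤ b) :
    (a - b)^2 / (4*(a+b)) ≤
      Real.negMulLog ((a+b)/2) - (Real.negMulLog a + Real.negMulLog b)/2 := by
  rcases le_total b a with h | h
  · exact aux_key_le a b ha hb h
  · rw [show (a-b)^2 = (b-a)^2 from by ring, show a+b = b+a from by ring,
      show Real.negMulLog a + Real.negMulLog b = Real.negMulLog b + Real.negMulLog a from by ring]
    exact aux_key_le b a hb ha h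

theorem stmt_19 {X : Type*} [Countable X] (Γ : Set (X → ℝ))
    (hΓ : ∀ P ∈ Γ, (∀ x, 0 ≤ P x) ∧ Summable P ∧ ∑' x, P x = 1)
    (hconv : Convex ℝ Γ)
    (hsum : ∀ P ∈ Γ, Summable fun x => Real.negMulLog (P x))
    (Hstar : ℝ)
    (hlub : IsLUB ((fun P : X → ℝ => ∑' x, Real.negMulLog (P x)) '' Γ) Hstar)
    (Qn Qm : X → ℝ) (hQn : Qn ∈ Γ) (hQm : Qm ∈ Γ) (ε : ℝ) (hε : 0 < ε)
    (hn : Hstar - ∑' x, Real.negMulLog (Qn x) < ε)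
    (hm : Hstar - ∑' x, Real.negMulLog (Qm x) < ε) :
    (∑' x, |Qn x - Qm x|) ^ 2 ≤ 16 * ε := by
  obtain ⟨hQn0, hQnS, hQn1⟩ := hΓ Qn hQn
  obtain ⟨hQm0, hQmS, hQm1⟩ := hΓ Qm hQm
  set M : X → ℝ := fun x => (Qn x + Qm x)/2 with hMdef
  have hMΓ : M ∈ Γ := by
    have h := hconv hQn hQm (by norm_num : (0:ℝ) ≤ 1/2) (by norm_num : (0:ℝ) ≤ 1/2)
      (by norm_num : (1:ℝ)/2 + 1/2 = 1)
    have : M = (1/2 : ℝ) • Qn + (1/2 : ℝ) • Qm := by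
      funext x
      simp [hMdef, Pi.add_apply, Pi.smul_apply, smul_eq_mul]
      ring
    rwa [this]
  have hMS : Summable (fun x => Real.negMulLog (M x)) := hsum M hMΓ
  have hnS : Summable (fun x => Real.negMulLog (Qn x)) := hsum Qn hQn
  have hmS : Summable (fun x => Real.negMulLog (Qm x)) := hsum Qm hQm
  set j : X → ℝ :=
    fun x => Real.negMulLog (M x) - (Real.negMulLog (Qn x) + Real.negMulLog (Qm x))/2
    with hjdef
  have hhalfS : Summable (fun x => (Real.negMulLog (Qn x) + Real.negMulLog (Qm x))/2) :=
    (hnS.add hmS).div_const 2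
  have hjS : Summable j := hMS.sub hhalfS
  set g : X → ℝ := fun x => (Qn x - Qm x)^2/(4*(Qn x + Qm x)) with hgdef
  have hgle : ∀ x, g x ≤ j x := by
    intro x
    exact aux_key (Qn x) (Qm x) (hQn0 x) (hQm0 x)
  have hg0 : ∀ x, 0 ≤ g x := by
    intro x
    have h1 : 0 ≤ Qn x + Qm x := add_nonneg (hQn0 x) (hQm0 x)
    positivity
  have hgS : Summable g := Summable.of_nonneg_of_le hg0 hgle hjS
  have hjsum : ∑' x, j x ≤ ε := by
    have hjt : ∑' x, j x = (∑' x, Real.negMulLog (M x))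
        - ((∑' x, Real.negMulLog (Qn x)) + ∑' x, Real.negMulLog (Qm x))/2 := by
      rw [Summable.tsum_sub hMS hhalfS, tsum_div_const, Summable.tsum_add hnS hmS]
    have hMle : ∑' x, Real.negMulLog (M x) ≤ Hstar := hlub.1 ⟨M, hMΓ, rfl⟩
    rw [hjt]
    linarith
  have hgsum : ∑' x, g x ≤ ε := le_trans (Summable.tsum_le_tsum hgle hgS hjS) hjsum
  have hsS : Summable (fun x => Qn x + Qm x) := hQnS.add hQmS
  have hssum : ∑' x, (Qn x + Qm x) = 2 := by
    rw [Summable.tsum_add hQnS hQmS, hQn1, hQm1]; norm_num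
  have habs_le : ∀ x, |Qn x - Qm x| ≤ Qn x + Qm x := by
    intro x
    rw [abs_sub_le_iff]
    constructor <;> [linarith [hQm0 x]; linarith [hQn0 x]]
  have habsS : Summable (fun x => |Qn x - Qm x|) :=
    Summable.of_nonneg_of_le (fun x => abs_nonneg _) habs_le hsS
  have hT : ∑' x, |Qn x - Qm x| ≤ Real.sqrt (8*ε) := by
    apply Summable.tsum_le_of_sum_le habsS
    intro F
    have hF1 : ∑ x ∈ F, (|Qn x - Qm x| / Real.sqrt (Qn x + Qm x))^2 ≤ 4*ε := by
      have e : ∀ x, (|Qn x - Qm x| / Real.sqrt (Qn x + Qm x))^2 = 4 * g x := by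
        intro x
        have hnn : 0 ≤ Qn x + Qm x := add_nonneg (hQn0 x) (hQm0 x)
        rw [div_pow, sq_abs, Real.sq_sqrt hnn, hgdef]
        rcases eq_or_lt_of_le hnn with h0 | h0
        · have h1 : Qn x = 0 := by linarith [hQn0 x, hQm0 x]
          have h2 : Qm x = 0 := by linarith [hQn0 x, hQm0 x]
          simp [h1, h2]
        · field_simp
      calc ∑ x ∈ F, (|Qn x - Qm x| / Real.sqrt (Qn x + Qm x))^2
          = ∑ x ∈ F, 4 * g x := Finset.sum_congr rfl (fun x _ => e x)
        _ ≤ ∑' x, 4 * g x := Summable.sum_le_tsum F (fun x _ => by linarith [hg0 x]) (hgS.mul_left 4)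
        _ = 4 * ∑' x, g x := tsum_mul_left
        _ ≤ 4 * ε := by linarith
    have hF2 : ∑ x ∈ F, (Real.sqrt (Qn x + Qm x))^2 ≤ 2 := by
      have e : ∀ x, (Real.sqrt (Qn x + Qm x))^2 = Qn x + Qm x :=
        fun x => Real.sq_sqrt (add_nonneg (hQn0 x) (hQm0 x))
      calc ∑ x ∈ F, (Real.sqrt (Qn x + Qm x))^2
          = ∑ x ∈ F, (Qn x + Qm x) := Finset.sum_congr rfl (fun x _ => e x)
        _ ≤ ∑' x, (Qn x + Qm x) :=
            Summable.sum_le_tsum F (fun x _ => add_nonneg (hQn0 x) (hQm0 x)) hsS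
        _ = 2 := hssum
    have CS := Finset.sum_mul_sq_le_sq_mul_sq F
      (fun x => |Qn x - Qm x| / Real.sqrt (Qn x + Qm x))
      (fun x => Real.sqrt (Qn x + Qm x))
    have hprod : ∀ x, |Qn x - Qm x| / Real.sqrt (Qn x + Qm x) * Real.sqrt (Qn x + Qm x)
        = |Qn x - Qm x| := by
      intro x
      rcases eq_or_lt_of_le (add_nonneg (hQn0 x) (hQm0 x)) with h0 | h0
      · have h1 : Qn x = 0 := by linarith [hQn0 x, hQm0 x]
        have h2 : Qm x = 0 := by linarith [hQn0 x, hQm0 x]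
        simp [h1, h2]
      · rw [div_mul_cancel₀]
        exact (Real.sqrt_pos.mpr h0).ne'
    rw [Real.le_sqrt (Finset.sum_nonneg (fun x _ => abs_nonneg _)) (by positivity)]
    have e2 : ∑ x ∈ F, |Qn x - Qm x|
        = ∑ x ∈ F, |Qn x - Qm x| / Real.sqrt (Qn x + Qm x) * Real.sqrt (Qn x + Qm x) :=
      Finset.sum_congr rfl (fun x _ => (hprod x).symm)
    rw [e2]
    calc (∑ x ∈ F, |Qn x - Qm x| / Real.sqrt (Qn x + Qm x) * Real.sqrt (Qn x + Qm x))^2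
        ≤ (∑ x ∈ F, (|Qn x - Qm x| / Real.sqrt (Qn x + Qm x))^2)
          * ∑ x ∈ F, (Real.sqrt (Qn x + Qm x))^2 := CS
      _ ≤ 4*ε * 2 := by
          apply mul_le_mul hF1 hF2 (Finset.sum_nonneg (fun x _ => sq_nonneg _)) (by linarith)
      _ = 8*ε := by ring
  have hT0 : 0 ≤ ∑' x, |Qn x - Qm x| := tsum_nonneg (fun x => abs_nonneg _)
  calc (∑' x, |Qn x - Qm x|)^2 ≤ (Real.sqrt (8*ε))^2 := by
        apply pow_le_pow_left₀ hT0 hT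
    _ = 8*ε := Real.sq_sqrt (by positivity)
    _ ≤ 16*ε := by linarith
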